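/- Let τ > 0, n ∈ ℕ, and λ ∈ ℂ with Re λ < 0. Then the Laguerre coefficient for order of generalization α = 0 satisfies s_{n,τ,0,λ} = −2√τ · (2λ+τ)^n / (2λ−τ)^{n+1}. -/

import Mathlib

open MeasureTheory

/-- The (ordinary) Laguerre polynomial `L_n(t) = ∑_{k=0}^n (-1)^k (n!/((k!)²(n-k)!)) t^k`. -/
noncomputable def ordLagPoly (n : ℕ) (t : ℝ) : ℝ :=
  ∑ k ∈ Finset.range (n + 1),
    (-1 : ℝ) ^ k * ((n.factorial : ℝ) / ((k.factorial : ℝ) ^ 2 * (n - k).factorial)) * t ^ k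

/-- The Laguerre function `l_{n,τ}(t) = √τ e^{-τt/2} L_n(τt)`. -/
noncomputable def ordLagFun (τ : ℝ) (n : ℕ) (t : ℝ) : ℝ :=
  Real.sqrt τ * Real.exp (-τ * t / 2) * ordLagPoly n (τ * t)

/-- The Laguerre coefficient `s_{n,τ,0,λ} = ∫₀^∞ e^{λ t} l_{n,τ}(t) dt`. -/
noncomputable def ordLagCoef (τ : ℝ) (n : ℕ) (z : ℂ) : ℂ :=
  ∫ t in Set.Ioi (0 : ℝ), Complex.exp (z * t) * (ordLagFun τ n t : ℂ)


open MeasureTheory Set Filter Asymptotics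

lemma tendsto_pow_mul_exp_aux (m : ℕ) {c : ℝ} (hc : c < 0) :
    Tendsto (fun t : ℝ => t ^ m * Real.exp (c * t)) atTop (nhds 0) := by
  have h := tendsto_rpow_mul_exp_neg_mul_atTop_nhds_zero (m : ℝ) (-c) (by linarith)
  refine h.congr' ?_
  filter_upwards [eventually_gt_atTop (0:ℝ)] with t ht
  rw [Real.rpow_natCast, neg_neg]

lemma tendsto_cexp_aux (m : ℕ) {w : ℂ} (hw : w.re < 0) (c : ℂ) :
    Tendsto (fun t : ℝ => (t:ℂ) ^ m * Complex.exp (w * t) * c) atTop (nhds 0) := by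
  rw [tendsto_zero_iff_norm_tendsto_zero]
  have hE : (fun t : ℝ => ‖(t:ℂ) ^ m * Complex.exp (w * t) * c‖) =ᶠ[atTop]
      fun t => t ^ m * Real.exp (w.re * t) * ‖c‖ := by
    filter_upwards [eventually_ge_atTop (0:ℝ)] with t ht
    simp [Complex.norm_exp, Complex.mul_re, abs_of_nonneg ht, norm_mul, norm_pow]
  rw [tendsto_congr' hE]
  simpa using (tendsto_pow_mul_exp_aux m hw).mul_const ‖c‖

lemma integrableOn_pow_mul_cexp (k : ℕ) {w : ℂ} (hw : w.re < 0) :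
    IntegrableOn (fun t : ℝ => (t:ℂ) ^ k * Complex.exp (w * t)) (Ioi 0) := by
  have hb : 0 < -w.re / 2 := by linarith
  have hg : IntegrableOn (fun t : ℝ => t ^ k * Real.exp (w.re * t)) (Ioi 0) := by
    apply integrable_of_isBigO_exp_neg hb
    · exact (continuous_pow k).continuousOn.mul
        ((Real.continuous_exp.comp (continuous_const.mul continuous_id)).continuousOn)
    · apply IsLittleO.isBigO
      rw [isLittleO_iff_tendsto (fun x hx => absurd hx (Real.exp_ne_zero _))]
      have : (fun t : ℝ => t ^ k * Real.exp (w.re * t) / Real.exp (-(-w.re/2) * t))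
          = fun t : ℝ => t ^ k * Real.exp (w.re / 2 * t) := by
        funext t
        rw [mul_div_assoc, ← Real.exp_sub]
        ring_nf
      rw [this]
      exact tendsto_pow_mul_exp_aux k (by linarith)
  refine Integrable.mono' hg ?_ ?_
  · exact (Continuous.aestronglyMeasurable (by continuity)).restrict
  · filter_upwards [ae_restrict_mem measurableSet_Ioi] with t ht
    rw [mem_Ioi] at ht
    simp [norm_mul, norm_pow, Complex.norm_exp, Complex.mul_re, abs_of_nonneg ht.le, le_refl]

lemma integral_pow_mul_cexp (k : ℕ) {w : ℂ} (hw : w.re < 0) :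
    ∫ t in Ioi (0:ℝ), (t:ℂ) ^ k * Complex.exp (w * t) = k.factorial / (-w) ^ (k + 1) := by
  have hw0 : w ≠ 0 := fun h => by simp [h] at hw
  have hnw : (-w) ≠ 0 := neg_ne_zero.mpr hw0
  have hcexp : ∀ x : ℝ, HasDerivAt (fun t : ℝ => Complex.exp (w * t))
      (w * Complex.exp (w * x)) x := by
    intro x
    have h1 : HasDerivAt (fun t : ℂ => Complex.exp (w * t)) (w * Complex.exp (w * x)) (x:ℂ) := by
      simpa [mul_comm] using ((hasDerivAt_id (x:ℂ)).const_mul w).cexp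
    exact h1.comp_ofReal
  induction k with
  | zero =>
    have hderiv : ∀ x ∈ Ici (0:ℝ), HasDerivAt (fun t : ℝ => (t:ℂ)^0 * Complex.exp (w * t) * w⁻¹)
        ((x:ℂ)^0 * Complex.exp (w * x)) x := by
      intro x _
      have := ((hcexp x).mul_const w⁻¹)
      simp only [pow_zero, one_mul]
      exact this.congr_deriv (by linear_combination (Complex.exp (w * x)) * mul_inv_cancel₀ hw0)
    have h := integral_Ioi_of_hasDerivAt_of_tendsto' hderiv
      (by simpa using integrableOn_pow_mul_cexp 0 hw) (tendsto_cexp_aux 0 hw w⁻¹)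
    simp only [pow_zero, one_mul] at h ⊢
    rw [h]
    simp [Complex.exp_zero]
  | succ k ih =>
    have hderiv : ∀ x ∈ Ici (0:ℝ), HasDerivAt
        (fun t : ℝ => (t:ℂ)^(k+1) * Complex.exp (w * t) * w⁻¹)
        ((x:ℂ)^(k+1) * Complex.exp (w * x) + ((k+1 : ℂ) * w⁻¹) * ((x:ℂ)^k * Complex.exp (w * x))) x := by
      intro x _
      have hpow : HasDerivAt (fun t : ℝ => (t:ℂ)^(k+1)) ((k+1 : ℂ) * (x:ℂ)^k) x := by
        simpa using (hasDerivAt_pow (k+1) (x:ℂ)).comp_ofReal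
      have := (hpow.mul (hcexp x)).mul_const w⁻¹
      exact this.congr_deriv (by
        linear_combination ((x:ℂ) ^ (k + 1) * Complex.exp (w * x)) * mul_inv_cancel₀ hw0)
    have hint1 := integrableOn_pow_mul_cexp (k+1) hw
    have hint2 := (integrableOn_pow_mul_cexp k hw).const_mul ((k+1 : ℂ) * w⁻¹)
    have h := integral_Ioi_of_hasDerivAt_of_tendsto' hderiv
      (hint1.add hint2) (tendsto_cexp_aux (k+1) hw w⁻¹)
    rw [integral_add hint1 hint2, integral_const_mul, ih] at h
    simp only [Complex.ofReal_zero, ne_eq, zero_pow, Nat.succ_ne_zero, not_false_eq_true,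
      zero_mul, mul_zero, zero_sub, neg_eq_zero] at h
    have h2 : (∫ t in Ioi (0:ℝ), (t:ℂ)^(k+1) * Complex.exp (w * t))
        = -(((k+1:ℂ) * w⁻¹) * ((k.factorial : ℂ) / (-w)^(k+1))) := by
      linear_combination h
    rw [h2, Nat.factorial_succ]
    push_cast
    rw [pow_succ (-w) (k+1), eq_div_iff (mul_ne_zero (pow_ne_zero _ hnw) hnw)]
    field_simp
open MeasureTheory Set Filter Asymptotics in
theorem ordLagCoef_eq (τ : ℝ) (hτ : 0 < τ) (n : ℕ) (z : ℂ) (hz : z.re < 0) :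
    ordLagCoef τ n z =
      -2 * (Real.sqrt τ : ℂ) * (2 * z + τ) ^ n / (2 * z - τ) ^ (n + 1) := by
  set w : ℂ := z - ((τ / 2 : ℝ) : ℂ) with hw_def
  have hw : w.re < 0 := by
    simp only [hw_def, Complex.sub_re, Complex.ofReal_re]
    linarith
  have hw0 : w ≠ 0 := fun h => by simp [h] at hw
  set a : ℕ → ℂ := fun k => (Real.sqrt τ : ℂ) *
    ((-1 : ℂ) ^ k * ((n.factorial : ℂ) / ((k.factorial : ℂ) ^ 2 * ((n - k).factorial : ℂ))) *
      (τ : ℂ) ^ k) with ha_def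
  have e1 : (2 * z + (τ:ℂ)) = 2 * ((τ:ℂ) + w) := by rw [hw_def]; push_cast; ring
  have e2 : (2 * z - (τ:ℂ)) = 2 * w := by rw [hw_def]; push_cast; ring
  have hrw : EqOn (fun t : ℝ => Complex.exp (z * t) * (ordLagFun τ n t : ℂ))
      (fun t : ℝ => ∑ k ∈ Finset.range (n + 1), a k * ((t:ℂ) ^ k * Complex.exp (w * t)))
      (Ioi 0) := by
    intro t _
    simp only [ordLagFun, ordLagPoly]
    push_cast
    rw [Finset.mul_sum, Finset.mul_sum]
    apply Finset.sum_congr rfl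
    intro k _
    have he : Complex.exp (z * t) * Complex.exp ((-(τ:ℂ) * t) / 2) = Complex.exp (w * t) := by
      rw [← Complex.exp_add]
      congr 1
      rw [hw_def]
      push_cast
      ring
    rw [ha_def, ← he]
    push_cast
    ring
  clear_value w
  rw [ordLagCoef, setIntegral_congr_fun measurableSet_Ioi hrw,
    integral_finset_sum _ (fun k _ => ((integrableOn_pow_mul_cexp k hw).const_mul (a k)))]
  simp_rw [integral_const_mul, integral_pow_mul_cexp _ hw]
  have key : ∑ k ∈ Finset.range (n + 1), a k * ((k.factorial : ℂ) / (-w) ^ (k + 1))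
      = -(Real.sqrt τ : ℂ) * ((τ : ℂ) + w) ^ n / w ^ (n + 1) := by
    rw [add_pow, Finset.mul_sum, Finset.sum_div]
    refine Finset.sum_congr rfl fun k hk => ?_
    have hkn : k ≤ n := Nat.lt_succ_iff.mp (Finset.mem_range.mp hk)
    have hfac : (n.factorial : ℂ) = (n.choose k) * k.factorial * (n - k).factorial := by
      exact_mod_cast (Nat.choose_mul_factorial_mul_factorial hkn).symm
    have hpw : w ^ (n + 1) = w ^ (k + 1) * w ^ (n - k) := by
      rw [← pow_add]; congr 1; omega
    have hk0 : (k.factorial : ℂ) ≠ 0 := Nat.cast_ne_zero.mpr k.factorial_ne_zero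
    have hnk0 : ((n - k).factorial : ℂ) ≠ 0 := Nat.cast_ne_zero.mpr (n - k).factorial_ne_zero
    simp only [ha_def]
    rw [hfac, hpw, neg_pow w (k + 1), pow_succ (-1 : ℂ) k]
    have hu0 : w ^ (k + 1) ≠ 0 := pow_ne_zero _ hw0
    have hv0 : w ^ (n - k) ≠ 0 := pow_ne_zero _ hw0
    generalize w ^ (k + 1) = u at hu0 ⊢
    generalize w ^ (n - k) = v at hv0 ⊢
    field_simp
  rw [key]
  rw [e1, e2, mul_pow, mul_pow]
  field_simp
  ring
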